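/- Let $n = 2(2k-1) \in 4\mathbb{Z}+2$ and consider the $n$-fold cover of $\mathrm{Sp}_{2r}$ with $Q(\alpha_r^\vee) = 1$ as above, so $Y_{Q,n} = (n/2)\mathbb{Z}^r$ and $Y_{Q,n}^{sc}$ is spanned by $(n/2)\alpha_i^\vee$ ($i<r$) and $n\alpha_r^\vee$. Then $w_{\alpha_r}[k\alpha_r^\vee] - k\alpha_r^\vee = (1-2k)\alpha_r^\vee$, and this element lies in $Y_{Q,n}$ but not in $Y_{Q,n}^{sc}$; consequently the cover is not persistent. -/

import Mathlib

open scoped BigOperators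

/-- Standard basis vector of `ℚ^r`. -/
def stdE (r : ℕ) (i : Fin r) : Fin r → ℚ := fun k => if k = i then 1 else 0

/-- Simple coroots of type `C_r` in `ℚ^r`: `α_i^∨ = e_i - e_{i+1}` (`i < r`),
`α_r^∨ = e_r`. -/
def simpleCorootC (r : ℕ) (i : Fin r) : Fin r → ℚ :=
  if h : (i : ℕ) + 1 < r then stdE r i - stdE r ⟨(i : ℕ) + 1, h⟩ else stdE r i

/-- A signed permutation `(σ, ε)` acting on `ℚ^r` (the Weyl group of type `C_r`). -/
def signedPerm (r : ℕ) (σ : Equiv.Perm (Fin r)) (ε : Fin r → Bool)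
    (y : Fin r → ℚ) : Fin r → ℚ :=
  fun i => (if ε i then (-1 : ℚ) else 1) * y (σ.symm i)

/-- `ρ^∨`, the half-sum of the positive coroots of `C_r`. -/
def rhoCheckC (r : ℕ) : Fin r → ℚ := fun i => (r : ℚ) - (i : ℕ) - 1/2

/-- The twisted Weyl action `w[y] = w(y - ρ^∨) + ρ^∨`. -/
def twistedC (r : ℕ) (σ : Equiv.Perm (Fin r)) (ε : Fin r → Bool)
    (y : Fin r → ℚ) : Fin r → ℚ :=
  signedPerm r σ ε (y - rhoCheckC r) + rhoCheckC r

/-- `Y_{Q,n} = (n/2)ℤ^r`; here the parameter is `m' = n/2`. -/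
def YQnC (r m' : ℕ) : Set (Fin r → ℚ) := {v | ∀ i, ∃ c : ℤ, v i = (m' : ℚ) * c}

/-- `Y_{Q,n}^{sc}`, spanned by `(n/2)·α_i^∨` for `i < r` and `n·α_r^∨`;
here the parameter is `m' = n/2`. -/
def YQnscC (r m' : ℕ) : AddSubgroup (Fin r → ℚ) :=
  AddSubgroup.closure
    {v | ∃ i : Fin r,
      v = (if (i : ℕ) + 1 < r then (m' : ℚ) else 2 * m') • simpleCorootC r i}

/-- Sum-of-coordinates additive homomorphism. -/
def sumCoords (r : ℕ) : (Fin r → ℚ) →+ ℚ where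
  toFun v := ∑ i, v i
  map_zero' := by simp
  map_add' v w := by simp [Finset.sum_add_distrib]

lemma sumCoords_stdE (r : ℕ) (i : Fin r) : sumCoords r (stdE r i) = 1 := by
  simp [sumCoords, stdE]

lemma sumCoords_gen (r m' : ℕ) (v : Fin r → ℚ)
    (hv : ∃ i : Fin r,
      v = (if (i : ℕ) + 1 < r then (m' : ℚ) else 2 * m') • simpleCorootC r i) :
    ∃ c : ℤ, sumCoords r v = (2 * m' : ℚ) * c := by
  obtain ⟨i, rfl⟩ := hv
  by_cases h : (i : ℕ) + 1 < r
  · refine ⟨0, ?_⟩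
    have hs : sumCoords r (simpleCorootC r i) = 0 := by
      rw [simpleCorootC, dif_pos h, map_sub, sumCoords_stdE, sumCoords_stdE]; ring
    have : ((m' : ℚ) • simpleCorootC r i) = fun j => (m' : ℚ) * simpleCorootC r i j := rfl
    rw [if_pos h]
    show (∑ j, (m' : ℚ) * simpleCorootC r i j) = _
    rw [← Finset.mul_sum]
    have : (∑ j, simpleCorootC r i j) = sumCoords r (simpleCorootC r i) := rfl
    rw [this, hs]; ring
  · refine ⟨1, ?_⟩
    have hs : sumCoords r (simpleCorootC r i) = 1 := by
      rw [simpleCorootC, dif_neg h, sumCoords_stdE]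
    rw [if_neg h]
    show (∑ j, (2 * (m' : ℚ)) * simpleCorootC r i j) = _
    rw [← Finset.mul_sum]
    have : (∑ j, simpleCorootC r i j) = sumCoords r (simpleCorootC r i) := rfl
    rw [this, hs]; ring

lemma sumCoords_mem_sc (r m' : ℕ) (v : Fin r → ℚ) (hv : v ∈ YQnscC r m') :
    ∃ c : ℤ, sumCoords r v = (2 * m' : ℚ) * c := by
  induction hv using AddSubgroup.closure_induction with
  | mem v hv => exact sumCoords_gen r m' v hv
  | zero => exact ⟨0, by simp⟩
  | add v w _ _ hv hw =>
      obtain ⟨c, hc⟩ := hv; obtain ⟨d, hd⟩ := hw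
      exact ⟨c + d, by rw [map_add, hc, hd]; push_cast; ring⟩
  | neg v _ hv =>
      obtain ⟨c, hc⟩ := hv
      exact ⟨-c, by rw [map_neg, hc]; push_cast; ring⟩

lemma key_eq (r k : ℕ) (hr : 0 < r) :
    twistedC r 1 (fun i => decide ((i : ℕ) = r - 1)) ((k : ℚ) • stdE r ⟨r - 1, Nat.pred_lt hr.ne'⟩)
        - (k : ℚ) • stdE r ⟨r - 1, Nat.pred_lt hr.ne'⟩
      = ((1 : ℚ) - 2 * k) • stdE r ⟨r - 1, Nat.pred_lt hr.ne'⟩ := by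
  funext i
  simp only [twistedC, signedPerm, rhoCheckC, stdE, Pi.sub_apply, Pi.add_apply,
    Pi.smul_apply, smul_eq_mul]
  have hsymm : (1 : Equiv.Perm (Fin r)).symm i = i := rfl
  rw [hsymm]
  by_cases h : i = (⟨r - 1, Nat.pred_lt hr.ne'⟩ : Fin r)
  · rw [h]
    have hd : decide (((⟨r - 1, Nat.pred_lt hr.ne'⟩ : Fin r) : ℕ) = r - 1) = true := by simp
    simp only [hd, Fin.val_mk, if_pos rfl]
    have hc : (((r - 1 : ℕ) : ℚ)) = (r : ℚ) - 1 := by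
      rw [Nat.cast_sub hr, Nat.cast_one]
    rw [hc]
    norm_num
    ring
  · have h2 : ¬ (decide ((i : ℕ) = r - 1) = true) := by
      simp only [decide_eq_true_eq]
      exact fun hc => h (Fin.ext hc)
    rw [if_neg h2, if_neg h]
    ring

lemma sumCoords_smul (r : ℕ) (c : ℚ) (v : Fin r → ℚ) :
    sumCoords r (c • v) = c * sumCoords r v := by
  simp [sumCoords, Finset.mul_sum]

lemma cast_two_k_sub_one (k : ℕ) (hk : 1 ≤ k) :
    ((2 * k - 1 : ℕ) : ℚ) = 2 * (k : ℚ) - 1 := by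
  rw [Nat.cast_sub (by omega), Nat.cast_mul]
  norm_num

lemma not_mem_sc (r k : ℕ) (hr : 0 < r) (hk : 1 ≤ k) :
    ((1 : ℚ) - 2 * k) • stdE r ⟨r - 1, Nat.pred_lt hr.ne'⟩ ∉
      (YQnscC r (2 * k - 1) : Set (Fin r → ℚ)) := by
  intro hmem
  obtain ⟨c, hc⟩ := sumCoords_mem_sc r (2 * k - 1) _ hmem
  rw [sumCoords_smul, sumCoords_stdE, mul_one, cast_two_k_sub_one k hk] at hc
  have h0 : (2 * (k : ℚ) - 1) * (2 * (c : ℚ) + 1) = 0 := by linear_combination -hc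
  rcases mul_eq_zero.mp h0 with h | h
  · have hk1 : (1 : ℚ) ≤ (k : ℚ) := by exact_mod_cast hk
    linarith
  · have h2 : (2 * c + 1 : ℤ) = 0 := by exact_mod_cast (by push_cast; linarith : ((2 * c + 1 : ℤ) : ℚ) = 0)
    omega

lemma mem_Qn (r k : ℕ) (hr : 0 < r) (hk : 1 ≤ k) :
    ((1 : ℚ) - 2 * k) • stdE r ⟨r - 1, Nat.pred_lt hr.ne'⟩ ∈ YQnC r (2 * k - 1) := by
  intro i
  by_cases h : i = (⟨r - 1, Nat.pred_lt hr.ne'⟩ : Fin r)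
  · exact ⟨-1, by simp [stdE, h, cast_two_k_sub_one k hk]⟩
  · exact ⟨0, by simp [stdE, h]⟩

/-- Let `n = 2(2k-1) ∈ 4ℤ+2` and consider the `n`-fold cover of
`Sp_{2r}` with `Q(α_r^∨) = 1`, so `Y_{Q,n} = (n/2)ℤ^r` and `Y_{Q,n}^{sc}` is spanned
by `(n/2)α_i^∨` (`i < r`) and `nα_r^∨`.  Then
`w_{α_r}[k α_r^∨] - k α_r^∨ = (1-2k) α_r^∨`, this element lies in `Y_{Q,n}` but not
in `Y_{Q,n}^{sc}`, and consequently the cover is not persistent. -/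
theorem statement6 (r k : ℕ) (hr : 0 < r) (hk : 1 ≤ k) :
    (twistedC r 1 (fun i => decide ((i : ℕ) = r - 1)) ((k : ℚ) • stdE r ⟨r - 1, by omega⟩)
        - (k : ℚ) • stdE r ⟨r - 1, by omega⟩
      = ((1 : ℚ) - 2 * k) • stdE r ⟨r - 1, by omega⟩) ∧
    (twistedC r 1 (fun i => decide ((i : ℕ) = r - 1)) ((k : ℚ) • stdE r ⟨r - 1, by omega⟩)
        - (k : ℚ) • stdE r ⟨r - 1, by omega⟩ ∈ YQnC r (2 * k - 1)) ∧
    (twistedC r 1 (fun i => decide ((i : ℕ) = r - 1)) ((k : ℚ) • stdE r ⟨r - 1, by omega⟩)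
        - (k : ℚ) • stdE r ⟨r - 1, by omega⟩ ∉ (YQnscC r (2 * k - 1) : Set (Fin r → ℚ))) ∧
    ¬ (∀ y : Fin r → ℚ, (∀ i, ∃ z : ℤ, y i = (z : ℚ)) →
        {p : Equiv.Perm (Fin r) × (Fin r → Bool) |
            twistedC r p.1 p.2 y - y ∈ (YQnscC r (2 * k - 1) : Set (Fin r → ℚ))}
          = {p : Equiv.Perm (Fin r) × (Fin r → Bool) |
              twistedC r p.1 p.2 y - y ∈ YQnC r (2 * k - 1)}) := by
  have hE := key_eq r k hr
  have hQ : twistedC r 1 (fun i => decide ((i : ℕ) = r - 1))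
        ((k : ℚ) • stdE r ⟨r - 1, by omega⟩) - (k : ℚ) • stdE r ⟨r - 1, by omega⟩
      ∈ YQnC r (2 * k - 1) := by
    rw [hE]; exact mem_Qn r k hr hk
  have hS : twistedC r 1 (fun i => decide ((i : ℕ) = r - 1))
        ((k : ℚ) • stdE r ⟨r - 1, by omega⟩) - (k : ℚ) • stdE r ⟨r - 1, by omega⟩
      ∉ (YQnscC r (2 * k - 1) : Set (Fin r → ℚ)) := by
    rw [hE]; exact not_mem_sc r k hr hk
  refine ⟨hE, hQ, hS, ?_⟩
  intro hall
  have hint : ∀ i, ∃ z : ℤ, ((k : ℚ) • stdE r ⟨r - 1, by omega⟩) i = (z : ℚ) := by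
    intro i
    by_cases h : i = (⟨r - 1, by omega⟩ : Fin r)
    · exact ⟨k, by simp [stdE, h]⟩
    · exact ⟨0, by simp [stdE, h]⟩
  have hsets := hall ((k : ℚ) • stdE r ⟨r - 1, by omega⟩) hint
  have hp : ((1 : Equiv.Perm (Fin r)), fun i : Fin r => decide ((i : ℕ) = r - 1)) ∈
      {p : Equiv.Perm (Fin r) × (Fin r → Bool) |
        twistedC r p.1 p.2 ((k : ℚ) • stdE r ⟨r - 1, by omega⟩)
          - (k : ℚ) • stdE r ⟨r - 1, by omega⟩ ∈ YQnC r (2 * k - 1)} := hQ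
  rw [← hsets] at hp
  exact hS hp
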